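/- Let f : ℝⁿ × ℝᵐ → ℝⁿ and φ : ℝⁿ × ℝᵐ → ℝᵏ be continuously differentiable, let C : ℝⁿ → ℝ be differentiable, and let t_f > 0. Let (q,u,p,λ) : [0,t_f] → ℝⁿ × ℝᵐ × ℝⁿ × ℝᵏ be a continuously differentiable solution of the adjoint DAE system: q̇ = f(q,u), ṗ = −D_qf(q,u)ᵀ p − D_qφ(q,u)ᵀ λ, 0 = φ(q,u), 0 = D_uf(q,u)ᵀ p + D_uφ(q,u)ᵀ λ, satisfying the terminal condition p(t_f) = ∇C(q(t_f)), and let (δq, δu) : [0,t_f] → ℝⁿ × ℝᵐ be a continuously differentiable solution of the variational equations δq̇ = D_qf(q,u) δq + D_uf(q,u) δu and 0 = D_qφ(q,u) δq + D_uφ(q,u) δu along (q,u). Then ⟨∇C(q(t_f)), δq(t_f)⟩ = ⟨p(0), δq(0)⟩, i.e., p(0) is the adjoint sensitivity of the terminal cost C(q(t_f)) with respect to a perturbation δq(0) of the initial condition. -/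
import Mathlib


open scoped RealInnerProductSpace

noncomputable section

abbrev Euc (n : ℕ) : Type := EuclideanSpace ℝ (Fin n)

/-- Partial Jacobian `D_qF(q,u)` with respect to the first argument. -/
noncomputable def Dq {n m k : ℕ} (F : Euc n × Euc m → Euc k) (q : Euc n) (u : Euc m) :
    Euc n →L[ℝ] Euc k :=
  fderiv ℝ (fun q' => F (q', u)) q

/-- Partial Jacobian `D_uF(q,u)` with respect to the second argument. -/
noncomputable def Du {n m k : ℕ} (F : Euc n × Euc m → Euc k) (q : Euc n) (u : Euc m) :
    Euc m →L[ℝ] Euc k :=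
  fderiv ℝ (fun u' => F (q, u')) u

/-- `D_qF(q,u)ᵀ`, the transpose (adjoint) of the partial Jacobian in `q`. -/
noncomputable def DqT {n m k : ℕ} (F : Euc n × Euc m → Euc k) (q : Euc n) (u : Euc m) :
    Euc k →L[ℝ] Euc n :=
  ContinuousLinearMap.adjoint (Dq F q u)

/-- `D_uF(q,u)ᵀ`, the transpose (adjoint) of the partial Jacobian in `u`. -/
noncomputable def DuT {n m k : ℕ} (F : Euc n × Euc m → Euc k) (q : Euc n) (u : Euc m) :
    Euc k →L[ℝ] Euc m :=
  ContinuousLinearMap.adjoint (Du F q u)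

/-- Partial gradient `∇_qL(q,u)`. -/
noncomputable def gradQ {n m : ℕ} (L : Euc n × Euc m → ℝ) (q : Euc n) (u : Euc m) : Euc n :=
  gradient (fun q' => L (q', u)) q

/-- Partial gradient `∇_uL(q,u)`. -/
noncomputable def gradU {n m : ℕ} (L : Euc n × Euc m → ℝ) (q : Euc n) (u : Euc m) : Euc m :=
  gradient (fun u' => L (q, u')) u

/-- adjoint sensitivity of a terminal cost. Along a solution of the
adjoint DAE system with terminal condition `p(t_f) = ∇C(q(t_f))` and a solution of
the variational equations, `⟨∇C(q(t_f)), δq(t_f)⟩ = ⟨p(0), δq(0)⟩`. -/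
theorem adjoint_sensitivity_terminal_cost {n m k : ℕ}
    (f : Euc n × Euc m → Euc n) (φ : Euc n × Euc m → Euc k) (C : Euc n → ℝ)
    (hf : ContDiff ℝ 1 f) (hφ : ContDiff ℝ 1 φ) (hC : Differentiable ℝ C)
    (tf : ℝ) (htf : 0 < tf)
    (q : ℝ → Euc n) (u : ℝ → Euc m) (p : ℝ → Euc n) (lam : ℝ → Euc k)
    (δq : ℝ → Euc n) (δu : ℝ → Euc m)
    (hq : ContDiff ℝ 1 q) (hu : ContDiff ℝ 1 u) (hp : ContDiff ℝ 1 p)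
    (hlam : ContDiff ℝ 1 lam) (hδq : ContDiff ℝ 1 δq) (hδu : ContDiff ℝ 1 δu)
    (hqode : ∀ t ∈ Set.Icc (0 : ℝ) tf, HasDerivAt q (f (q t, u t)) t)
    (hpode : ∀ t ∈ Set.Icc (0 : ℝ) tf,
      HasDerivAt p (-(DqT f (q t) (u t) (p t)) - DqT φ (q t) (u t) (lam t)) t)
    (hconstr : ∀ t ∈ Set.Icc (0 : ℝ) tf, φ (q t, u t) = 0)
    (hadj : ∀ t ∈ Set.Icc (0 : ℝ) tf,
      DuT f (q t) (u t) (p t) + DuT φ (q t) (u t) (lam t) = 0)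
    (hδqode : ∀ t ∈ Set.Icc (0 : ℝ) tf,
      HasDerivAt δq (Dq f (q t) (u t) (δq t) + Du f (q t) (u t) (δu t)) t)
    (hδconstr : ∀ t ∈ Set.Icc (0 : ℝ) tf,
      Dq φ (q t) (u t) (δq t) + Du φ (q t) (u t) (δu t) = 0)
    (hterm : p tf = gradient C (q tf)) :
    ⟪gradient C (q tf), δq tf⟫ = ⟪p 0, δq 0⟫ := by
  have key : ∀ t ∈ Set.Icc (0:ℝ) tf,
      HasDerivAt (fun s => ⟪p s, δq s⟫) 0 t := by
    intro t ht
    have h := (hpode t ht).inner ℝ (hδqode t ht)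
    have hzero : (⟪p t, Dq f (q t) (u t) (δq t) + Du f (q t) (u t) (δu t)⟫
        + ⟪-(DqT f (q t) (u t) (p t)) - DqT φ (q t) (u t) (lam t), δq t⟫ : ℝ) = 0 := by
      have e1 : (⟪DqT f (q t) (u t) (p t), δq t⟫ : ℝ)
          = ⟪p t, Dq f (q t) (u t) (δq t)⟫ :=
        ContinuousLinearMap.adjoint_inner_left _ _ _
      have e2 : (⟪DqT φ (q t) (u t) (lam t), δq t⟫ : ℝ)
          = ⟪lam t, Dq φ (q t) (u t) (δq t)⟫ :=
        ContinuousLinearMap.adjoint_inner_left _ _ _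
      have e3 : Dq φ (q t) (u t) (δq t) = -(Du φ (q t) (u t) (δu t)) := by
        have := hδconstr t ht; linear_combination (norm := module) this
      have e4 : (⟪DuT f (q t) (u t) (p t) + DuT φ (q t) (u t) (lam t), δu t⟫ : ℝ) = 0 := by
        rw [hadj t ht]; simp
      have e5 : (⟪DuT f (q t) (u t) (p t), δu t⟫ : ℝ)
          = ⟪p t, Du f (q t) (u t) (δu t)⟫ :=
        ContinuousLinearMap.adjoint_inner_left _ _ _
      have e6 : (⟪DuT φ (q t) (u t) (lam t), δu t⟫ : ℝ)
          = ⟪lam t, Du φ (q t) (u t) (δu t)⟫ :=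
        ContinuousLinearMap.adjoint_inner_left _ _ _
      rw [inner_add_right, inner_sub_left, inner_neg_left, e1, e2, e3, inner_neg_right]
      rw [inner_add_left, e5, e6] at e4
      linarith
    rw [hzero] at h
    exact h
  have hconst := constant_of_has_deriv_right_zero
    (f := fun s => ⟪p s, δq s⟫) (a := (0:ℝ)) (b := tf)
    ((hp.continuous.inner hδq.continuous).continuousOn)
    (fun x hx => ((key x ⟨hx.1, hx.2.le⟩).hasDerivWithinAt))
  have := hconst tf ⟨htf.le, le_refl tf⟩
  rw [← hterm]
  simpa using this


end
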